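/- With B, critical values, and i(t,t') as above, the number of closed intervals [t_k, t_j] in B equals i(t_k,t_j) - i(t'',t_j) - i(t_k,t') + i(t'',t') for any t'' with t_{k-1} < t'' < t_k and any t' with t_j < t' < t_{j+1}. -/
import Mathlib


open Classical Multiset

noncomputable section

/-- The four kinds of intervals: closed-closed, closed-open, open-closed, open-open. -/
inductive BarKind : Type
  | cc | co | oc | oo
  deriving DecidableEq

/-- A real interval of one of the four types, with endpoints `a ≤ b`. -/
structure Bar : Type where
  kind : BarKind
  a : ℝ
  b : ℝ

instance : DecidableEq Bar := Classical.decEq _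

namespace Bar

/-- The underlying set of points of the interval. -/
def toSet (I : Bar) : Set ℝ :=
  match I.kind with
  | .cc => Set.Icc I.a I.b
  | .co => Set.Ico I.a I.b
  | .oc => Set.Ioc I.a I.b
  | .oo => Set.Ioo I.a I.b

/-- Nonemptiness condition: `a ≤ b` for closed intervals, `a < b` otherwise. -/
def Valid (I : Bar) : Prop :=
  match I.kind with
  | .cc => I.a ≤ I.b
  | _ => I.a < I.b

def rightOpen (I : Bar) : Prop := I.kind = .co ∨ I.kind = .oo
def leftOpen (I : Bar) : Prop := I.kind = .oc ∨ I.kind = .oo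
def leftClosed (I : Bar) : Prop := I.kind = .cc ∨ I.kind = .co

end Bar

/-- `i(t,t')`: the number of intervals of `B` containing `[t,t']`. -/
def icount (B : Multiset Bar) (t t' : ℝ) : ℕ :=
  countP (fun I => Set.Icc t t' ⊆ I.toSet) B

/-- `l(t)`: the number of intervals of `B` containing `t`. -/
def lcount (B : Multiset Bar) (t : ℝ) : ℕ :=
  countP (fun I => t ∈ I.toSet) B

/-- `l⁺(t;t')`: intervals of `B` containing `t` with open right endpoint `≤ t'`. -/
def lplus (B : Multiset Bar) (t t' : ℝ) : ℕ :=
  countP (fun I => t ∈ I.toSet ∧ I.rightOpen ∧ I.b ≤ t') B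

/-- `l⁻(t;t'')`: intervals of `B` containing `t` with open left endpoint `≥ t''`. -/
def lminus (B : Multiset Bar) (t t'' : ℝ) : ℕ :=
  countP (fun I => t ∈ I.toSet ∧ I.leftOpen ∧ t'' ≤ I.a) B

/-- `e(t;t',t'')`: open intervals `(a,b)` of `B` with `t'' ≤ a < t < b ≤ t'`. -/
def ecount (B : Multiset Bar) (t t' t'' : ℝ) : ℕ :=
  countP (fun I => I.kind = .oo ∧ t'' ≤ I.a ∧ I.a < t ∧ t < I.b ∧ I.b ≤ t') B

/-- All endpoints of intervals of `B` lie among the critical values `t 0, …, t N`. -/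
def endpointsIn (B : Multiset Bar) (t : ℕ → ℝ) (N : ℕ) : Prop :=
  ∀ I ∈ B, (∃ i ≤ N, I.a = t i) ∧ (∃ j ≤ N, I.b = t j)

theorem stmt2 (N : ℕ) (t : ℕ → ℝ) (ht : StrictMono t)
    (B : Multiset Bar) (hB : endpointsIn B t N)
    (k j : ℕ) (hkj : k ≤ j) (hjN : j ≤ N)
    (t'' t' : ℝ) (h1 : t'' < t k) (h2 : k = 0 ∨ t (k - 1) < t'')
    (h3 : t j < t') (h4 : j = N ∨ t' < t (j + 1)) :
    (count (⟨.cc, t k, t j⟩ : Bar) B : ℤ) =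
      (icount B (t k) (t j) : ℤ) - icount B t'' (t j) - icount B (t k) t'
        + icount B t'' t' := by
  have htkj : t k ≤ t j := ht.monotone hkj
  have h''j : t'' ≤ t j := le_of_lt (lt_of_lt_of_le h1 htkj)
  have hkt' : t k ≤ t' := le_of_lt (lt_of_le_of_lt htkj h3)
  have h''t' : t'' ≤ t' := le_of_lt (lt_of_lt_of_le h1 hkt')
  -- key real lemmas about critical values
  have L1 : ∀ i ≤ N, (t i ≤ t'' ↔ t i < t k) ∧ (t i < t'' ↔ t i < t k) := by
    intro i _
    have fwd : t i < t k → t i < t'' := by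
      intro h
      have hik : i < k := ht.lt_iff_lt.mp h
      rcases h2 with hk0 | hk
      · omega
      · exact lt_of_le_of_lt (ht.monotone (by omega : i ≤ k - 1)) hk
    constructor
    · exact ⟨fun h => lt_of_le_of_lt h h1, fun h => le_of_lt (fwd h)⟩
    · exact ⟨fun h => lt_trans h h1, fwd⟩
  have L2 : ∀ i ≤ N, (t j < t i ↔ t' < t i) ∧ (t j < t i ↔ t' ≤ t i) := by
    intro i hiN
    have fwd : t j < t i → t' < t i := by
      intro h
      have hji : j < i := ht.lt_iff_lt.mp h
      rcases h4 with hjN' | hj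
      · omega
      · exact lt_of_lt_of_le hj (ht.monotone (by omega : j + 1 ≤ i))
    constructor
    · exact ⟨fwd, fun h => lt_trans h3 h⟩
    · exact ⟨fun h => le_of_lt (fwd h), fun h => lt_of_lt_of_le h3 h⟩
  -- pointwise identity
  have key : ∀ I : Bar, (∃ i ≤ N, I.a = t i) → (∃ i ≤ N, I.b = t i) →
      ((if (⟨.cc, t k, t j⟩ : Bar) = I then 1 else 0 : ℤ)) =
        (if Set.Icc (t k) (t j) ⊆ I.toSet then 1 else 0)
        - (if Set.Icc t'' (t j) ⊆ I.toSet then 1 else 0)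
        - (if Set.Icc (t k) t' ⊆ I.toSet then 1 else 0)
        + (if Set.Icc t'' t' ⊆ I.toSet then 1 else 0) := by
    rintro ⟨kind, a, b⟩ ⟨ia, hia, rfl⟩ ⟨ib, hib, rfl⟩
    obtain ⟨hA1, hA2⟩ := L1 ia hia
    obtain ⟨hB1, hB2⟩ := L2 ib hib
    cases kind with
    | cc =>
        simp only [Bar.toSet, Set.Icc_subset_Icc_iff htkj, Set.Icc_subset_Icc_iff h''j,
          Set.Icc_subset_Icc_iff hkt', Set.Icc_subset_Icc_iff h''t',
          Bar.mk.injEq, true_and]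
        simp only [hA1, ← hB2]
        rcases lt_trichotomy (t ia) (t k) with h | h | h <;>
          rcases lt_trichotomy (t j) (t ib) with g | g | g <;>
          (try subst h) <;> (try subst g) <;>
          simp_all [le_of_lt, not_lt_of_gt, not_le_of_gt, ne_of_gt, ne_of_lt, lt_irrefl]
    | co =>
        simp only [Bar.toSet, Set.Icc_subset_Ico_iff htkj, Set.Icc_subset_Ico_iff h''j,
          Set.Icc_subset_Ico_iff hkt', Set.Icc_subset_Ico_iff h''t', Bar.mk.injEq]
        rw [if_neg (by simp)]
        simp only [hB1]
        ring
    | oc =>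
        simp only [Bar.toSet, Set.Icc_subset_Ioc_iff htkj, Set.Icc_subset_Ioc_iff h''j,
          Set.Icc_subset_Ioc_iff hkt', Set.Icc_subset_Ioc_iff h''t', Bar.mk.injEq]
        rw [if_neg (by simp)]
        simp only [hA2]
        ring
    | oo =>
        simp only [Bar.toSet, Set.Icc_subset_Ioo_iff htkj, Set.Icc_subset_Ioo_iff h''j,
          Set.Icc_subset_Ioo_iff hkt', Set.Icc_subset_Ioo_iff h''t', Bar.mk.injEq]
        rw [if_neg (by simp)]
        simp only [hA2]
        ring
  -- induction over the multiset
  induction B using Multiset.induction with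
  | empty => simp [icount]
  | cons I s ih =>
      have hI := hB I (mem_cons_self I s)
      have hs : endpointsIn s t N := fun J hJ => hB J (mem_cons_of_mem hJ)
      have := key I hI.1 hI.2
      simp only [icount, count_cons, countP_cons] at *
      push_cast
      rw [ih hs]
      push_cast
      linarith [this]
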